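/- Let H be a 1-intersecting k-uniform hypergraph that is not a sunflower. Then |E(H)| ≤ k². -/
import Mathlib


/-- A 1-intersecting k-uniform hypergraph that is not a sunflower has at most k² edges. -/
theorem card_le_sq_of_one_intersecting_not_sunflower {V : Type*} [Fintype V] [DecidableEq V]
    (k : ℕ) (H : Finset (Finset V))
    (hunif : ∀ e ∈ H, e.card = k)
    (hint : ∀ e ∈ H, ∀ f ∈ H, e ≠ f → (e ∩ f).card = 1)
    (hnsun : ¬ ∃ C : Finset V, ∀ e ∈ H, ∀ f ∈ H, e ≠ f → e ∩ f = C) :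
    H.card ≤ k ^ 2 := by
  classical
  by_cases hH : H = ∅
  · subst hH; simp
  obtain ⟨e₀, he₀⟩ := Finset.nonempty_iff_ne_empty.mpr hH
  -- there is a second edge
  have hpair : ∃ f ∈ H, f ≠ e₀ := by
    by_contra h
    push_neg at h
    exact hnsun ⟨∅, fun e he f hf hef => absurd ((h e he).trans (h f hf).symm) hef⟩
  obtain ⟨f₀, hf₀, hne⟩ := hpair
  have hk1 : 1 ≤ k := by
    have h1 := hint e₀ he₀ f₀ hf₀ (Ne.symm hne)
    have h2 : (e₀ ∩ f₀).card ≤ e₀.card := Finset.card_le_card Finset.inter_subset_left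
    have h3 := hunif e₀ he₀
    omega
  set D : V → Finset (Finset V) := fun v => H.filter (fun a => v ∈ a) with hD
  -- degree bound
  have hdeg : ∀ v, (D v).card ≤ k := by
    intro v
    have hg : ∃ g ∈ H, v ∉ g := by
      by_contra h
      push_neg at h
      refine hnsun ⟨{v}, fun e he f hf hef => ?_⟩
      obtain ⟨w, hw⟩ := Finset.card_eq_one.mp (hint e he f hf hef)
      have hv : v ∈ e ∩ f := Finset.mem_inter.mpr ⟨h e he, h f hf⟩
      rw [hw, Finset.mem_singleton] at hv
      rw [hw, hv]
    obtain ⟨g, hgH, hvg⟩ := hg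
    have hkey : ∀ a ∈ D v, (a ∩ g).card = 1 := by
      intro a ha
      simp only [hD, Finset.mem_filter] at ha
      exact hint a ha.1 g hgH (by rintro rfl; exact hvg ha.2)
    have hle : (D v).card ≤ g.card := by
      apply Finset.card_le_card_of_injOn (fun a => if h : (a ∩ g).Nonempty then h.choose else v)
      · intro a ha
        have h1 := hkey a ha
        have hna : (a ∩ g).Nonempty := Finset.card_pos.mp (by omega)
        simp only [dif_pos hna]
        exact (Finset.mem_inter.mp hna.choose_spec).2
      · intro a ha b hb hab
        by_contra hneq
        have h1 := hkey a ha
        have h2 := hkey b hb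
        have hna : (a ∩ g).Nonempty := Finset.card_pos.mp (by omega)
        have hnb : (b ∩ g).Nonempty := Finset.card_pos.mp (by omega)
        simp only [dif_pos hna, dif_pos hnb] at hab
        simp only [Finset.mem_coe, hD, Finset.mem_filter] at ha hb
        have hab1 := hint a ha.1 b hb.1 hneq
        have hvab : a ∩ b = {v} := by
          obtain ⟨w, hw⟩ := Finset.card_eq_one.mp hab1
          have hv : v ∈ a ∩ b := Finset.mem_inter.mpr ⟨ha.2, hb.2⟩
          rw [hw, Finset.mem_singleton] at hv
          rw [hw, hv]
        have hxa := hna.choose_spec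
        have hxb : hna.choose ∈ b ∩ g := by rw [hab]; exact hnb.choose_spec
        have hx : hna.choose ∈ a ∩ b :=
          Finset.mem_inter.mpr ⟨(Finset.mem_inter.mp hxa).1, (Finset.mem_inter.mp hxb).1⟩
        rw [hvab, Finset.mem_singleton] at hx
        exact hvg (hx ▸ (Finset.mem_inter.mp hxa).2)
    calc (D v).card ≤ g.card := hle
      _ = k := hunif g hgH
  -- cover H by the stars of vertices of e₀
  have hcover : H ⊆ e₀.biUnion (fun v => D v) := by
    intro f hf
    rw [Finset.mem_biUnion]
    by_cases hfe : f = e₀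
    · subst hfe
      have hfn : f.Nonempty := Finset.card_pos.mp (by rw [hunif f hf]; omega)
      obtain ⟨v, hv⟩ := hfn
      exact ⟨v, hv, Finset.mem_filter.mpr ⟨hf, hv⟩⟩
    · have h1 := hint e₀ he₀ f hf (fun h => hfe h.symm)
      obtain ⟨v, hv⟩ := Finset.card_pos.mp (by omega : 0 < (e₀ ∩ f).card)
      obtain ⟨hve, hvf⟩ := Finset.mem_inter.mp hv
      exact ⟨v, hve, Finset.mem_filter.mpr ⟨hf, hvf⟩⟩
  calc H.card ≤ (e₀.biUnion (fun v => D v)).card := Finset.card_le_card hcover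
    _ ≤ ∑ v ∈ e₀, (D v).card := Finset.card_biUnion_le
    _ ≤ ∑ v ∈ e₀, k := Finset.sum_le_sum (fun v _ => hdeg v)
    _ = e₀.card * k := by rw [Finset.sum_const, smul_eq_mul]
    _ = k * k := by rw [hunif e₀ he₀]
    _ = k ^ 2 := (sq k).symm
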